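/- In a graph G with all degrees D(x) satisfying 3 ≤ D(x) ≤ D, for any two vertices y, y' at graph distance exactly 2 (sharing a common neighbor x), there exist oriented edges e, e' with t(e) = y, t(e') = y', and (S*²S²)(e,e') ≥ (D−1)^{−4}. -/

import Mathlib

open Finset Matrix

/-- The matrix (real entries) of the non-backtracking transfer operator `S`,
acting by `(Smat *ᵥ f) e = (1/(D(o(e))-1)) ∑_{e' ⇝ e} f e'`. -/
noncomputable def Smat {V : Type*} [Fintype V] [DecidableEq V]
    (G : SimpleGraph V) [DecidableRel G.Adj] : Matrix G.Dart G.Dart ℝ :=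
  fun e e' => if e'.snd = e.fst ∧ e'.symm ≠ e then ((G.degree e.fst : ℝ) - 1)⁻¹ else 0

/-- The matrix of `S*²S²`, `S*` being the `ℓ²(B)`-adjoint (transpose) of `S`. -/
noncomputable def SstarSqSq {V : Type*} [Fintype V] [DecidableEq V]
    (G : SimpleGraph V) [DecidableRel G.Adj] : Matrix G.Dart G.Dart ℝ :=
  (Smat G)ᵀ * (Smat G)ᵀ * (Smat G * Smat G)

/-- if `3 ≤ D(x) ≤ D` for all vertices and `y, y'` are two vertices
at graph distance exactly 2 (with common neighbour `x`), then there exist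
oriented edges `e, e'` with `t(e) = y`, `t(e') = y'` and
`(S*²S²)(e,e') ≥ (D-1)⁻⁴`. -/
theorem SstarSqSq_dist_two_lower_bound {V : Type*} [Fintype V] [DecidableEq V]
    (G : SimpleGraph V) [DecidableRel G.Adj] (D : ℕ)
    (hdeg : ∀ x : V, 3 ≤ G.degree x ∧ G.degree x ≤ D)
    (x y y' : V) (hxy : G.Adj x y) (hxy' : G.Adj x y')
    (hne : y ≠ y') (hnadj : ¬ G.Adj y y') :
    ∃ e e' : G.Dart, e.snd = y ∧ e'.snd = y' ∧
      (1 : ℝ) / ((D : ℝ) - 1) ^ 4 ≤ SstarSqSq G e e' := by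
  classical
  have hD3 : 3 ≤ D := le_trans (hdeg x).1 (hdeg x).2
  have hDpos : (0 : ℝ) < (D : ℝ) - 1 := by
    have : (3 : ℝ) ≤ (D : ℝ) := by exact_mod_cast hD3
    linarith
  set c : ℝ := ((D : ℝ) - 1)⁻¹ with hc
  have hcpos : 0 < c := inv_pos.mpr hDpos
  -- entry lower bound lemma for Smat
  have hS0 : ∀ p q : G.Dart, 0 ≤ Smat G p q := by
    intro p q
    unfold Smat
    split
    · have h3 : (3 : ℝ) ≤ (G.degree p.fst : ℝ) := by exact_mod_cast (hdeg p.fst).1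
      exact inv_nonneg.mpr (by linarith)
    · exact le_rfl
  have hSc : ∀ p q : G.Dart, q.snd = p.fst → q.symm ≠ p → c ≤ Smat G p q := by
    intro p q h1 h2
    unfold Smat
    rw [if_pos ⟨h1, h2⟩]
    have h3 : (3 : ℝ) ≤ (G.degree p.fst : ℝ) := by exact_mod_cast (hdeg p.fst).1
    have h4 : (G.degree p.fst : ℝ) ≤ (D : ℝ) := by exact_mod_cast (hdeg p.fst).2
    rw [hc]
    gcongr
    linarith
  -- choose a neighbour a of y with a ≠ x
  have hay : ((G.neighborFinset y) \ {x}).Nonempty := by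
    rw [← Finset.card_pos]
    have h1 := Finset.le_card_sdiff ({x} : Finset V) (G.neighborFinset y)
    have h2 : 3 ≤ (G.neighborFinset y).card := by
      rw [G.card_neighborFinset_eq_degree]; exact (hdeg y).1
    simp only [Finset.card_singleton] at h1
    omega
  obtain ⟨a, hamem⟩ := hay
  rw [Finset.mem_sdiff, SimpleGraph.mem_neighborFinset, Finset.mem_singleton] at hamem
  obtain ⟨hya, hax⟩ := hamem
  -- choose a neighbour a' of y' with a' ≠ x
  have hay' : ((G.neighborFinset y') \ {x}).Nonempty := by
    rw [← Finset.card_pos]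
    have h1 := Finset.le_card_sdiff ({x} : Finset V) (G.neighborFinset y')
    have h2 : 3 ≤ (G.neighborFinset y').card := by
      rw [G.card_neighborFinset_eq_degree]; exact (hdeg y').1
    simp only [Finset.card_singleton] at h1
    omega
  obtain ⟨a', hamem'⟩ := hay'
  rw [Finset.mem_sdiff, SimpleGraph.mem_neighborFinset, Finset.mem_singleton] at hamem'
  obtain ⟨hya', hax'⟩ := hamem'
  -- choose a neighbour v of x with v ∉ {y, y'}
  have hv : ((G.neighborFinset x) \ {y, y'}).Nonempty := by
    rw [← Finset.card_pos]
    have h1 := Finset.le_card_sdiff ({y, y'} : Finset V) (G.neighborFinset x)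
    have h2 : 3 ≤ (G.neighborFinset x).card := by
      rw [G.card_neighborFinset_eq_degree]; exact (hdeg x).1
    have h3 : ({y, y'} : Finset V).card ≤ 2 := Finset.card_insert_le _ _
    omega
  obtain ⟨v, hvmem⟩ := hv
  rw [Finset.mem_sdiff, SimpleGraph.mem_neighborFinset, Finset.mem_insert,
    Finset.mem_singleton] at hvmem
  obtain ⟨hxv, hvne⟩ := hvmem
  push_neg at hvne
  obtain ⟨hvy, hvy'⟩ := hvne
  -- the darts
  refine ⟨⟨(a, y), hya.symm⟩, ⟨(a', y'), hya'.symm⟩, rfl, rfl, ?_⟩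
  set e : G.Dart := ⟨(a, y), hya.symm⟩ with he
  set e' : G.Dart := ⟨(a', y'), hya'.symm⟩ with he'
  set g : G.Dart := ⟨(y, x), hxy.symm⟩ with hg
  set g' : G.Dart := ⟨(y', x), hxy'.symm⟩ with hg'
  set f : G.Dart := ⟨(x, v), hxv⟩ with hf
  -- the Smat bounds for the four used transitions
  have hb1 : c ≤ Smat G g e := by
    apply hSc
    · rfl
    · intro h
      have := congrArg (fun d => d.toProd.2) h
      simp [he, hg] at this
      exact hax this
  have hb2 : c ≤ Smat G f g := by
    apply hSc
    · rfl
    · intro h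
      have := congrArg (fun d => d.toProd.2) h
      simp [hf, hg] at this
      exact hvy this.symm
  have hb3 : c ≤ Smat G g' e' := by
    apply hSc
    · rfl
    · intro h
      have := congrArg (fun d => d.toProd.2) h
      simp [he', hg'] at this
      exact hax' this
  have hb4 : c ≤ Smat G f g' := by
    apply hSc
    · rfl
    · intro h
      have := congrArg (fun d => d.toProd.2) h
      simp [hf, hg'] at this
      exact hvy' this.symm
  -- lower bound for A e f = ((Smat G)ᵀ * (Smat G)ᵀ) e f
  have hA : c * c ≤ ((Smat G)ᵀ * (Smat G)ᵀ) e f := by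
    rw [Matrix.mul_apply]
    have hterm : c * c ≤ (Smat G)ᵀ e g * (Smat G)ᵀ g f := by
      simp only [Matrix.transpose_apply]
      exact mul_le_mul hb1 hb2 hcpos.le (le_trans hcpos.le hb1)
    refine le_trans hterm (Finset.single_le_sum (f := fun j => (Smat G)ᵀ e j * (Smat G)ᵀ j f) (fun i _ => ?_) (Finset.mem_univ g))
    simp only [Matrix.transpose_apply]
    exact mul_nonneg (hS0 _ _) (hS0 _ _)
  have hB : c * c ≤ (Smat G * Smat G) f e' := by
    rw [Matrix.mul_apply]
    have hterm : c * c ≤ Smat G f g' * Smat G g' e' :=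
      mul_le_mul hb4 hb3 hcpos.le (le_trans hcpos.le hb4)
    refine le_trans hterm (Finset.single_le_sum (f := fun j => Smat G f j * Smat G j e') (fun i _ => ?_) (Finset.mem_univ g'))
    exact mul_nonneg (hS0 _ _) (hS0 _ _)
  have hentry : (c * c) * (c * c) ≤ SstarSqSq G e e' := by
    unfold SstarSqSq
    rw [Matrix.mul_apply]
    have hterm : (c * c) * (c * c) ≤ ((Smat G)ᵀ * (Smat G)ᵀ) e f * (Smat G * Smat G) f e' :=
      mul_le_mul hA hB (mul_nonneg hcpos.le hcpos.le)
        (le_trans (mul_nonneg hcpos.le hcpos.le) hA)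
    refine le_trans hterm (Finset.single_le_sum (f := fun j => ((Smat G)ᵀ * (Smat G)ᵀ) e j * (Smat G * Smat G) j e') (fun i _ => ?_) (Finset.mem_univ f))
    refine mul_nonneg ?_ ?_
    · rw [Matrix.mul_apply]
      exact Finset.sum_nonneg fun j _ => mul_nonneg (hS0 _ _) (hS0 _ _)
    · rw [Matrix.mul_apply]
      exact Finset.sum_nonneg fun j _ => mul_nonneg (hS0 _ _) (hS0 _ _)
  have hfinal : (1 : ℝ) / ((D : ℝ) - 1) ^ 4 = (c * c) * (c * c) := by
    rw [hc]
    field_simp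
  rw [hfinal]
  exact hentry
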